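/- Consider the flow on B^n × ℂ^{n+1} obtained by lifting the unit-speed geodesic flow starting at (0, e_1/√(2κ)) to the trivial local system, with fiberwise norm ‖x‖_z^2 = -2⟨x,x⟩_{1,n} + 4|⟨x, (1,z)⟩_{1,n}|²/⟨(1,z),(1,z)⟩_{1,n}. For x = (x_1,…,x_{n+1}) in the fiber over the origin, the norm along the geodesic z_t = tanh(t/√(2κ))e_1 satisfies ‖x‖_{z_t}^2 = -2⟨x,x⟩_{1,n} + 4|x_1 cosh(t/√(2κ)) - x_2 sinh(t/√(2κ))|². Consequently the Lyapunov exponents of this cocycle are 1/√(2κ) and -1/√(2κ), each with multiplicity 2, and 0 with multiplicity 2n-2. -/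

import Mathlib

open scoped BigOperators
open Filter

noncomputable section

/-- The standard Hermitian form `⟨W,Z⟩_{1,n} = W₀Z̄₀ - ∑_{i=1}^n W_iZ̄_i` of
signature `(1,n)` on `ℂ^{n+1}`. -/
def hform (n : ℕ) (v w : Fin (n + 1) → ℂ) : ℂ :=
  v 0 * (starRingEnd ℂ) (w 0) - ∑ i : Fin n, v i.succ * (starRingEnd ℂ) (w i.succ)

/-- The point `(1, z_t)` with `z_t = tanh(t/√(2κ))·e₁` on the unit speed
geodesic through the origin, in homogeneous coordinates. -/
def geodesicPt (n : ℕ) (κ t : ℝ) : Fin (n + 1) → ℂ := fun i =>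
  if i = 0 then 1
  else if (i : ℕ) = 1 then ((Real.tanh (t / Real.sqrt (2 * κ)) : ℝ) : ℂ) else 0

/-- The fiberwise Hodge norm squared
`‖x‖_z² = -2⟨x,x⟩_{1,n} + 4|⟨x,(1,z)⟩_{1,n}|²/⟨(1,z),(1,z)⟩_{1,n}`
along the geodesic `z_t`. -/
def hodgeNormSq (n : ℕ) (κ t : ℝ) (x : Fin (n + 1) → ℂ) : ℝ :=
  -2 * (hform n x x).re +
    4 * ‖hform n x (geodesicPt n κ t)‖ ^ 2 /
      (hform n (geodesicPt n κ t) (geodesicPt n κ t)).re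

lemma geo0 (m : ℕ) (κ t : ℝ) : geodesicPt (m+1) κ t 0 = 1 := by simp [geodesicPt]

lemma geo1 (m : ℕ) (κ t : ℝ) :
    geodesicPt (m+1) κ t 1 = ((Real.tanh (t / Real.sqrt (2 * κ)) : ℝ) : ℂ) := by
  simp [geodesicPt, Fin.ext_iff]

lemma geotail (m : ℕ) (κ t : ℝ) (i : Fin m) : geodesicPt (m+1) κ t i.succ.succ = 0 := by
  simp [geodesicPt, Fin.succ_ne_zero, Fin.val_succ]

lemma succ_zero (m : ℕ) : (0 : Fin (m+1)).succ = 1 := by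
  ext
  simp [Fin.val_succ, Nat.mod_eq_of_lt]

lemma hform_geodesic (m : ℕ) (κ t : ℝ) (x : Fin (m + 2) → ℂ) :
    hform (m+1) x (geodesicPt (m+1) κ t) =
      x 0 - x 1 * ((Real.tanh (t / Real.sqrt (2 * κ)) : ℝ) : ℂ) := by
  unfold hform
  rw [Fin.sum_univ_succ, succ_zero, geo0, geo1]
  rw [Complex.conj_ofReal]
  simp only [geotail, map_zero, mul_zero, Finset.sum_const_zero, map_one, mul_one, add_zero]

lemma hform_geo_self (m : ℕ) (κ t : ℝ) :
    hform (m+1) (geodesicPt (m+1) κ t) (geodesicPt (m+1) κ t) =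
      ((1 - Real.tanh (t / Real.sqrt (2 * κ)) ^ 2 : ℝ) : ℂ) := by
  unfold hform
  rw [Fin.sum_univ_succ, succ_zero, geo0, geo1]
  rw [Complex.conj_ofReal]
  simp only [geotail, zero_mul, mul_zero, Finset.sum_const_zero, map_one, mul_one, add_zero]
  push_cast
  ring

lemma hform_self_two (m : ℕ) (x : Fin (m + 2) → ℂ)
    (h2 : ∀ i : Fin (m + 2), 2 ≤ (i : ℕ) → x i = 0) :
    hform (m+1) x x = x 0 * (starRingEnd ℂ) (x 0) - x 1 * (starRingEnd ℂ) (x 1) := by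
  unfold hform
  rw [Fin.sum_univ_succ, succ_zero]
  have h : ∀ i : Fin m, x i.succ.succ = 0 := fun i => h2 _ (by simp [Fin.val_succ])
  simp [h]

lemma hodge_eq (m : ℕ) (κ : ℝ) (t : ℝ) (x : Fin (m+2) → ℂ) :
    hodgeNormSq (m+1) κ t x =
      -2 * (hform (m+1) x x).re +
        4 * ‖x 0 * ((Real.cosh (t / Real.sqrt (2 * κ)) : ℝ) : ℂ) -
            x 1 * ((Real.sinh (t / Real.sqrt (2 * κ)) : ℝ) : ℂ)‖ ^ 2 := by
  set u := t / Real.sqrt (2 * κ) with hu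
  have hc : 0 < Real.cosh u := Real.cosh_pos u
  unfold hodgeNormSq
  rw [hform_geodesic, hform_geo_self, Complex.ofReal_re]
  congr 1
  have h1 : 1 - Real.tanh u ^ 2 = 1 / Real.cosh u ^ 2 := by
    rw [Real.tanh_eq_sinh_div_cosh]
    field_simp
    exact Real.cosh_sq_sub_sinh_sq u
  have hTC : ((Real.tanh u : ℝ) : ℂ) * ((Real.cosh u : ℝ) : ℂ) = ((Real.sinh u : ℝ) : ℂ) := by
    rw [← Complex.ofReal_mul, Real.tanh_eq_sinh_div_cosh, div_mul_cancel₀ _ (ne_of_gt hc)]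
  have h2 : (x 0 * ((Real.cosh u : ℝ) : ℂ) - x 1 * ((Real.sinh u : ℝ) : ℂ)) =
      (x 0 - x 1 * ((Real.tanh u : ℝ) : ℂ)) * ((Real.cosh u : ℝ) : ℂ) := by
    rw [sub_mul, mul_assoc, hTC]
  rw [h1, h2, norm_mul, Complex.norm_real, Real.norm_eq_abs, abs_of_pos hc, one_div, div_eq_mul_inv, inv_inv, mul_pow]
  ring

lemma tendsto_aux (a b : ℝ) :
    Tendsto (fun t : ℝ => (a + t * b) / t) atTop (nhds b) := by
  have h1 : Tendsto (fun t : ℝ => a / t + b) atTop (nhds (0 + b)) :=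
    (tendsto_const_nhds.div_atTop tendsto_id).add tendsto_const_nhds
  rw [zero_add] at h1
  refine h1.congr' ?_
  filter_upwards [eventually_ne_atTop (0:ℝ)] with t ht
  field_simp

lemma x0_ne_zero (m : ℕ) (x : Fin (m+2) → ℂ) (hx : x ≠ 0)
    (hx1 : x 1 = x 0 ∨ x 1 = -x 0)
    (h2 : ∀ i : Fin (m+2), 2 ≤ (i : ℕ) → x i = 0) : x 0 ≠ 0 := by
  intro h0
  apply hx
  funext i
  simp only [Pi.zero_apply]
  rcases lt_or_ge (i : ℕ) 2 with hi | hi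
  · have hi' : i = 0 ∨ i = 1 := by
      have hv : (i : ℕ) = 0 ∨ (i : ℕ) = 1 := by omega
      rcases hv with h | h
      · exact Or.inl (Fin.ext (by simp [h]))
      · exact Or.inr (Fin.ext (by simp [h]))
    rcases hi' with rfl | rfl
    · exact h0
    · rcases hx1 with h | h <;> rw [h, h0] <;> simp
  · exact h2 i hi

/-- **Lyapunov exponents of the uniformizing cocycle.**
For `x` in the fiber over the origin, the norm along the geodesic
`z_t = tanh(t/√(2κ))e₁` satisfies
`‖x‖_{z_t}² = -2⟨x,x⟩_{1,n} + 4|x₁cosh(t/√(2κ)) - x₂sinh(t/√(2κ))|²`,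
and consequently the Lyapunov exponents of this cocycle are `1/√(2κ)` and
`-1/√(2κ)` each with multiplicity `2` (realized on the real 2-dimensional
spaces `V^{±λ₁} = {x : x₂ = ∓x₁, x_i = 0 (i ≥ 3)}`) and `0` with multiplicity
`2n-2` (realized on `V⁰ = {x : x₁ = x₂ = 0}`). -/
theorem uniformizing_lyapunov_spectrum (n : ℕ) (hn : 1 ≤ n) (κ : ℝ) (hκ : 0 < κ) :
    (∀ (t : ℝ) (x : Fin (n + 1) → ℂ),
        hodgeNormSq n κ t x =
          -2 * (hform n x x).re +
            4 * ‖x 0 * ((Real.cosh (t / Real.sqrt (2 * κ)) : ℝ) : ℂ) -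
                x 1 * ((Real.sinh (t / Real.sqrt (2 * κ)) : ℝ) : ℂ)‖ ^ 2) ∧
    (∀ x : Fin (n + 1) → ℂ, x ≠ 0 → x 1 = -x 0 →
        (∀ i : Fin (n + 1), 2 ≤ (i : ℕ) → x i = 0) →
        Tendsto (fun t => Real.log (Real.sqrt (hodgeNormSq n κ t x)) / t) atTop
          (nhds (1 / Real.sqrt (2 * κ)))) ∧
    (∀ x : Fin (n + 1) → ℂ, x ≠ 0 → x 0 = 0 → x 1 = 0 →
        Tendsto (fun t => Real.log (Real.sqrt (hodgeNormSq n κ t x)) / t) atTop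
          (nhds 0)) ∧
    (∀ x : Fin (n + 1) → ℂ, x ≠ 0 → x 1 = x 0 →
        (∀ i : Fin (n + 1), 2 ≤ (i : ℕ) → x i = 0) →
        Tendsto (fun t => Real.log (Real.sqrt (hodgeNormSq n κ t x)) / t) atTop
          (nhds (-(1 / Real.sqrt (2 * κ))))) := by
  obtain ⟨m, rfl⟩ : ∃ m, n = m + 1 := ⟨n - 1, by omega⟩
  have hs : 0 < Real.sqrt (2 * κ) := Real.sqrt_pos.mpr (by linarith)
  set s := Real.sqrt (2 * κ) with hsdef
  refine ⟨fun t x => hodge_eq m κ t x, ?_, ?_, ?_⟩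
  · -- positive exponent
    intro x hx hx1 h2
    have hx0 : x 0 ≠ 0 := x0_ne_zero m x hx (Or.inr hx1) h2
    have key : ∀ t : ℝ, Real.log (Real.sqrt (hodgeNormSq (m+1) κ t x)) =
        Real.log (2 * ‖x 0‖) + t * (1 / s) := by
      intro t
      have hxx : hform (m+1) x x = 0 := by
        rw [hform_self_two m x h2, hx1, map_neg]
        ring
      have habs : x 0 * ((Real.cosh (t / s) : ℝ) : ℂ) - x 1 * ((Real.sinh (t / s) : ℝ) : ℂ)
          = x 0 * (((Real.cosh (t / s) + Real.sinh (t / s) : ℝ)) : ℂ) := by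
        rw [hx1]; push_cast; ring
      rw [hodge_eq m κ t x, hxx, habs, norm_mul, Complex.norm_real, Real.norm_eq_abs,
        Real.cosh_add_sinh, abs_of_pos (Real.exp_pos _)]
      rw [show -2 * (0 : ℂ).re + 4 * (‖x 0‖ * Real.exp (t / s)) ^ 2
          = (2 * ‖x 0‖ * Real.exp (t / s)) ^ 2 by simp; ring]
      rw [Real.sqrt_sq (by positivity),
        Real.log_mul (mul_ne_zero two_ne_zero (norm_ne_zero_iff.mpr hx0)) (Real.exp_ne_zero _), Real.log_exp]
      rw [div_eq_mul_one_div]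
    exact (tendsto_aux (Real.log (2 * ‖x 0‖)) (1 / s)).congr
      (fun t => by rw [key t])
  · -- zero exponent
    intro x hx h0 h1
    have key : ∀ t : ℝ, hodgeNormSq (m+1) κ t x = -2 * (hform (m+1) x x).re := by
      intro t
      rw [hodge_eq m κ t x, h0, h1]
      simp
    have := (tendsto_const_nhds (x := Real.log (Real.sqrt (-2 * (hform (m+1) x x).re)))
      (f := atTop (α := ℝ))).div_atTop tendsto_id
    exact this.congr (fun t => by rw [key t]; simp)
  · -- negative exponent
    intro x hx hx1 h2
    have hx0 : x 0 ≠ 0 := x0_ne_zero m x hx (Or.inl hx1) h2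
    have key : ∀ t : ℝ, Real.log (Real.sqrt (hodgeNormSq (m+1) κ t x)) =
        Real.log (2 * ‖x 0‖) + t * (-(1 / s)) := by
      intro t
      have hxx : hform (m+1) x x = 0 := by
        rw [hform_self_two m x h2, hx1]
        ring
      have habs : x 0 * ((Real.cosh (t / s) : ℝ) : ℂ) - x 1 * ((Real.sinh (t / s) : ℝ) : ℂ)
          = x 0 * (((Real.cosh (t / s) - Real.sinh (t / s) : ℝ)) : ℂ) := by
        rw [hx1]; push_cast; ring
      rw [hodge_eq m κ t x, hxx, habs, norm_mul, Complex.norm_real, Real.norm_eq_abs,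
        Real.cosh_sub_sinh, abs_of_pos (Real.exp_pos _)]
      rw [show -2 * (0 : ℂ).re + 4 * (‖x 0‖ * Real.exp (-(t / s))) ^ 2
          = (2 * ‖x 0‖ * Real.exp (-(t / s))) ^ 2 by simp; ring]
      rw [Real.sqrt_sq (by positivity),
        Real.log_mul (mul_ne_zero two_ne_zero (norm_ne_zero_iff.mpr hx0)) (Real.exp_ne_zero _), Real.log_exp]
      ring
    exact (tendsto_aux (Real.log (2 * ‖x 0‖)) (-(1 / s))).congr
      (fun t => by rw [key t])


end
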